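/- (Lower estimate of the inner-product sum, -1 < q < 0) Suppose -1 < q < 0 and set E(q) = (D(q)·C(|q|))^{-1} - (|q|/(1-|q|))·D(q)³·C(|q|)³. For all natural numbers r, s, r', s', k with r + s = r' + s' and r ≥ r', one has |∑_{i=0}^{r'} q^{(r-i)(r'-i) + k(r-i) + k(r'-i)}·[r']_q!·[s']_q!·binom(r,i)_q·binom(s,r'-i)_q| ≥ E(q)·|q|^{k(r-r')}·[r+s]_q!, where terms with i > r or r' - i > s vanish since the corresponding q-binomial coefficient is 0. -/

import Mathlib

/-- The q-integer `[n]_q = (1 - q^n)/(1 - q)`. -/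
noncomputable def qInt (q : ℝ) (n : ℕ) : ℝ := (1 - q ^ n) / (1 - q)

/-- The q-factorial `[n]_q! = [1]_q ⋯ [n]_q`, with `[0]_q! = 1`. -/
noncomputable def qFact (q : ℝ) : ℕ → ℝ
  | 0 => 1
  | n + 1 => qFact q n * qInt q (n + 1)

/-- The q-binomial coefficient `binom(n,m)_q`, with value `0` when `m > n`. -/
noncomputable def qBinom (q : ℝ) (n m : ℕ) : ℝ :=
  if m ≤ n then qFact q n / (qFact q m * qFact q (n - m)) else 0

/-- The constant `C(t) = ∏_{i=1}^∞ (1 - t^i)⁻¹` for `0 ≤ t < 1`. -/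
noncomputable def Cconst (t : ℝ) : ℝ := ∏' i : ℕ, (1 - t ^ (i + 1))⁻¹

/-- The constant `D(q) = ∏_{i=1}^∞ (1 + |q|^i)` for `-1 < q < 1`. -/
noncomputable def Dconst (q : ℝ) : ℝ := ∏' i : ℕ, (1 + |q| ^ (i + 1))

open Finset


/-- |log y| ≤ a/(1-a) when y is within a of 1. -/
lemma abs_log_le_aux {y a : ℝ} (ha0 : 0 ≤ a) (ha1 : a < 1) (h1 : 1 - a ≤ y) (h2 : y ≤ 1 + a) :
    |Real.log y| ≤ a / (1 - a) := by
  have hy : 0 < y := by linarith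
  have hu : Real.log y ≤ y - 1 := Real.log_le_sub_one_of_pos hy
  have hl : Real.log y⁻¹ ≤ y⁻¹ - 1 := Real.log_le_sub_one_of_pos (by positivity)
  rw [Real.log_inv] at hl
  have hyinv : y⁻¹ - 1 = (1 - y) / y := by field_simp
  rw [abs_le]
  have h1a : (0:ℝ) < 1 - a := by linarith
  constructor
  · rw [hyinv] at hl
    have : (1 - y) / y ≤ a / (1 - a) := by
      rcases le_or_gt (1 - y) 0 with h | h
      · exact le_trans (div_nonpos_of_nonpos_of_nonneg h hy.le) (by positivity)
      · exact div_le_div₀ ha0 (by linarith) h1a h1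
    linarith
  · have : a ≤ a / (1 - a) := by
      rw [le_div_iff₀ h1a]; nlinarith
    linarith

lemma summable_log_aux {t : ℝ} (ht0 : 0 ≤ t) (ht1 : t < 1) {f : ℕ → ℝ}
    (hb : ∀ n, |f n - 1| ≤ t ^ (n + 1)) : Summable fun n => Real.log (f n) := by
  apply Summable.of_norm_bounded (g := fun n => (1 - t)⁻¹ * t ^ (n + 1))
  · have : Summable fun n : ℕ => ((1 - t)⁻¹ * t) * t ^ n :=
      (summable_geometric_of_lt_one ht0 ht1).mul_left _
    apply this.congr
    intro n; ring
  · intro n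
    have hpow0 : 0 ≤ t ^ (n+1) := by positivity
    have hpow1 : t ^ (n+1) < 1 := pow_lt_one₀ ht0 ht1 (Nat.succ_ne_zero n)
    have hb' := hb n
    rw [abs_le] at hb'
    have := abs_log_le_aux hpow0 hpow1 (by linarith [hb'.1]) (by linarith [hb'.2])
    refine le_trans this ?_
    have htt : t ^ (n + 1) ≤ t := by
      simpa using pow_le_pow_of_le_one ht0 ht1.le (Nat.one_le_iff_ne_zero.mpr (Nat.succ_ne_zero n))
    calc t ^ (n+1) / (1 - t ^ (n+1)) ≤ t ^ (n+1) / (1 - t) := by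
          gcongr
      _ = (1 - t)⁻¹ * t ^ (n+1) := by ring


lemma multipliable_aux {f : ℕ → ℝ} (hpos : ∀ n, 0 < f n)
    (hs : Summable fun n => Real.log (f n)) : Multipliable f :=
  Real.multipliable_of_summable_log hpos hs

section Q
variable {q : ℝ} (hq₁ : -1 < q) (hq₂ : q < 0)

lemma qabs_lt_one (hq₁ : -1 < q) (hq₂ : q < 0) : -q < 1 := by linarith

lemma qpow_abs_lt (hq₁ : -1 < q) (hq₂ : q < 0) (j : ℕ) : |q ^ (j+1)| ≤ (-q) ^ (j+1) := by
  rw [abs_pow, abs_of_neg hq₂]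

lemma factor_pos (hq₁ : -1 < q) (hq₂ : q < 0) (j : ℕ) : 0 < 1 - q ^ (j+1) := by
  have h1 : |q ^ (j+1)| ≤ (-q)^(j+1) := qpow_abs_lt hq₁ hq₂ j
  have h2 : (-q)^(j+1) < 1 := pow_lt_one₀ (by linarith) (by linarith) (Nat.succ_ne_zero j)
  have := abs_le.mp h1
  linarith [this.2]

lemma multD (hq₁ : -1 < q) (hq₂ : q < 0) : Multipliable (fun i : ℕ => 1 + (-q) ^ (i+1)) := by
  have hq0 : (0:ℝ) ≤ -q := by linarith
  apply multipliable_aux (fun n => by nlinarith [pow_nonneg hq0 (n+1)])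
  apply summable_log_aux (t := -q) hq0 (by linarith)
  intro n
  have : (0:ℝ) ≤ (-q)^(n+1) := pow_nonneg hq0 (n+1)
  rw [add_sub_cancel_left, abs_of_nonneg this]

lemma multCinv (hq₁ : -1 < q) (hq₂ : q < 0) :
    Multipliable (fun i : ℕ => (1 - (-q) ^ (i+1))⁻¹) := by
  have hpos : ∀ n : ℕ, (0:ℝ) < 1 - (-q)^(n+1) := by
    intro n
    have : (-q)^(n+1) < 1 := pow_lt_one₀ (by linarith) (by linarith) (Nat.succ_ne_zero n)
    linarith
  have hq0 : (0:ℝ) ≤ -q := by linarith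
  apply multipliable_aux (fun n => by have := hpos n; positivity)
  have hsum : Summable fun n : ℕ => Real.log (1 - (-q)^(n+1)) := by
    apply summable_log_aux (t := -q) hq0 (by linarith)
    intro n
    have h1 : (0:ℝ) ≤ (-q)^(n+1) := pow_nonneg hq0 (n+1)
    rw [abs_sub_comm]
    rw [sub_sub_cancel, abs_of_nonneg h1]
  apply (hsum.neg).congr
  intro n
  rw [← Real.log_inv]
end Q

noncomputable def Pprod (q : ℝ) (n : ℕ) : ℝ := ∏ j ∈ Finset.range n, (1 - q ^ (j+1))

lemma prod_le_tprod' {f : ℕ → ℝ} (h1 : ∀ i, 1 ≤ f i) (hm : Multipliable f) (S : Finset ℕ) :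
    ∏ i ∈ S, f i ≤ ∏' i, f i := by
  refine ge_of_tendsto hm.hasProd ?_
  filter_upwards [Filter.eventually_ge_atTop S] with t ht
  have hsplit : (∏ i ∈ t \ S, f i) * ∏ i ∈ S, f i = ∏ i ∈ t, f i := Finset.prod_sdiff ht
  have h2 : (1:ℝ) ≤ ∏ i ∈ t \ S, f i := by
    calc (1:ℝ) = ∏ _i ∈ t \ S, (1:ℝ) := by simp
      _ ≤ ∏ i ∈ t \ S, f i := Finset.prod_le_prod (by simp) (fun i _ => h1 i)
  have h3 : (1:ℝ) ≤ ∏ i ∈ S, f i := by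
    calc (1:ℝ) = ∏ _i ∈ S, (1:ℝ) := by simp
      _ ≤ ∏ i ∈ S, f i := Finset.prod_le_prod (by simp) (fun i _ => h1 i)
  nlinarith

lemma one_le_tprod' {f : ℕ → ℝ} (h1 : ∀ i, 1 ≤ f i) (hm : Multipliable f) : 1 ≤ ∏' i, f i := by
  have := prod_le_tprod' h1 hm (∅ : Finset ℕ)
  simpa using this

section Q
variable {q : ℝ}


lemma negfactor_pos (hq₁ : -1 < q) (hq₂ : q < 0) (n : ℕ) : (0:ℝ) < 1 - (-q)^(n+1) := by
  have h : (-q)^(n+1) < 1 := pow_lt_one₀ (by linarith) (by linarith) (Nat.succ_ne_zero n)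
  linarith

lemma Dfactor_ge_one (hq₁ : -1 < q) (hq₂ : q < 0) (i : ℕ) : (1:ℝ) ≤ 1 + (-q)^(i+1) := by
  nlinarith [pow_nonneg (by linarith : (0:ℝ) ≤ -q) (i+1)]

lemma Cfactor_ge_one (hq₁ : -1 < q) (hq₂ : q < 0) (i : ℕ) : (1:ℝ) ≤ (1 - (-q)^(i+1))⁻¹ := by
  refine (one_le_inv₀ (negfactor_pos hq₁ hq₂ i)).mpr ?_
  nlinarith [pow_nonneg (by linarith : (0:ℝ) ≤ -q) (i+1)]

lemma Dconst_eq (hq₂ : q < 0) : Dconst q = ∏' i : ℕ, (1 + (-q) ^ (i+1)) := by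
  unfold Dconst; rw [abs_of_neg hq₂]

lemma one_le_D (hq₁ : -1 < q) (hq₂ : q < 0) : 1 ≤ Dconst q := by
  rw [Dconst_eq hq₂]
  exact one_le_tprod' (Dfactor_ge_one hq₁ hq₂) (multD hq₁ hq₂)

lemma one_le_C (hq₁ : -1 < q) (hq₂ : q < 0) : 1 ≤ Cconst (-q) := by
  exact one_le_tprod' (Cfactor_ge_one hq₁ hq₂) (multCinv hq₁ hq₂)

lemma minus_le_factor (hq₂ : q < 0) (j : ℕ) : 1 - (-q)^(j+1) ≤ 1 - q ^ (j+1) := by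
  have : |q ^ (j+1)| ≤ (-q)^(j+1) := by rw [abs_pow, abs_of_neg hq₂]
  have := abs_le.mp this
  linarith [this.1]

lemma factor_le_plus (hq₂ : q < 0) (j : ℕ) : 1 - q ^ (j+1) ≤ 1 + (-q)^(j+1) := by
  have : |q ^ (j+1)| ≤ (-q)^(j+1) := by rw [abs_pow, abs_of_neg hq₂]
  have := abs_le.mp this
  linarith [this.1]

lemma prod_le_D (hq₁ : -1 < q) (hq₂ : q < 0) (S : Finset ℕ) :
    ∏ j ∈ S, (1 - q ^ (j+1)) ≤ Dconst q := by
  rw [Dconst_eq hq₂]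
  calc ∏ j ∈ S, (1 - q ^ (j+1)) ≤ ∏ j ∈ S, (1 + (-q) ^ (j+1)) :=
        Finset.prod_le_prod (fun j _ => (factor_pos hq₁ hq₂ j).le)
          (fun j _ => factor_le_plus hq₂ j)
    _ ≤ ∏' i : ℕ, (1 + (-q) ^ (i+1)) :=
        prod_le_tprod' (Dfactor_ge_one hq₁ hq₂) (multD hq₁ hq₂) S

lemma Cinv_le_prod (hq₁ : -1 < q) (hq₂ : q < 0) (S : Finset ℕ) :
    (Cconst (-q))⁻¹ ≤ ∏ j ∈ S, (1 - q ^ (j+1)) := by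
  have h1 : ∏ j ∈ S, (1 - (-q) ^ (j+1)) ≤ ∏ j ∈ S, (1 - q ^ (j+1)) :=
    Finset.prod_le_prod (fun j _ => (negfactor_pos hq₁ hq₂ j).le)
      (fun j _ => minus_le_factor hq₂ j)
  have h2 : (∏ j ∈ S, (1 - (-q) ^ (j+1)))⁻¹ ≤ Cconst (-q) := by
    rw [← Finset.prod_inv_distrib]
    exact prod_le_tprod' (Cfactor_ge_one hq₁ hq₂) (multCinv hq₁ hq₂) S
  have hPpos : 0 < ∏ j ∈ S, (1 - (-q) ^ (j+1)) :=
    Finset.prod_pos (fun j _ => negfactor_pos hq₁ hq₂ j)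
  have h3 : (Cconst (-q))⁻¹ ≤ ∏ j ∈ S, (1 - (-q) ^ (j+1)) := by
    rw [inv_le_comm₀ (lt_of_lt_of_le one_pos (one_le_C hq₁ hq₂)) hPpos]
    exact h2
  linarith

-- Pprod facts
lemma Pprod_pos (hq₁ : -1 < q) (hq₂ : q < 0) (n : ℕ) : 0 < Pprod q n :=
  Finset.prod_pos (fun j _ => factor_pos hq₁ hq₂ j)

lemma Pprod_split (m n : ℕ) (h : m ≤ n) :
    Pprod q n = Pprod q m * ∏ j ∈ Finset.Ico m n, (1 - q ^ (j+1)) := by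
  unfold Pprod
  rw [Finset.range_eq_Ico, Finset.range_eq_Ico]
  exact (Finset.prod_Ico_consecutive (fun j => 1 - q ^ (j+1)) (Nat.zero_le m) h).symm

lemma Pprod_le_mul_D (hq₁ : -1 < q) (hq₂ : q < 0) {m n : ℕ} (h : m ≤ n) :
    Pprod q n ≤ Pprod q m * Dconst q := by
  rw [Pprod_split m n h]
  exact mul_le_mul_of_nonneg_left (prod_le_D hq₁ hq₂ _) (Pprod_pos hq₁ hq₂ m).le

lemma Pprod_ge_mul_Cinv (hq₁ : -1 < q) (hq₂ : q < 0) {m n : ℕ} (h : m ≤ n) :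
    Pprod q m * (Cconst (-q))⁻¹ ≤ Pprod q n := by
  rw [Pprod_split m n h]
  exact mul_le_mul_of_nonneg_left (Cinv_le_prod hq₁ hq₂ _) (Pprod_pos hq₁ hq₂ m).le

lemma qFact_eq (n : ℕ) : qFact q n = Pprod q n / (1 - q) ^ n := by
  induction n with
  | zero => simp [qFact, Pprod]
  | succ n ih =>
    rw [qFact, ih, qInt]
    unfold Pprod
    rw [Finset.prod_range_succ, div_mul_div_comm, ← pow_succ]

lemma qFact_pos (hq₁ : -1 < q) (hq₂ : q < 0) (n : ℕ) : 0 < qFact q n := by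
  rw [qFact_eq]
  have h1 : (0:ℝ) < 1 - q := by linarith
  exact div_pos (Pprod_pos hq₁ hq₂ n) (pow_pos h1 n)

end Q

lemma qFact_ne (hq₁ : -1 < q) (hq₂ : q < 0) (n : ℕ) : qFact q n ≠ 0 :=
  (qFact_pos hq₁ hq₂ n).ne'

lemma qBinom_eq (hq₁ : -1 < q) (hq₂ : q < 0) {n m : ℕ} (h : m ≤ n) :
    qBinom q n m = Pprod q n / (Pprod q m * Pprod q (n - m)) := by
  unfold qBinom
  rw [if_pos h, qFact_eq, qFact_eq, qFact_eq]
  have h1q : (0:ℝ) < 1 - q := by linarith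
  have hpow : (1 - q) ^ m * (1 - q) ^ (n - m) = (1 - q) ^ n := by
    rw [← pow_add]
    congr 1
    omega
  have e1 : ((1:ℝ) - q) ^ n ≠ 0 := by positivity
  have e2 : ((1:ℝ) - q) ^ m ≠ 0 := by positivity
  have e3 : ((1:ℝ) - q) ^ (n - m) ≠ 0 := by positivity
  have e4 := (Pprod_pos hq₁ hq₂ m).ne'
  have e5 := (Pprod_pos hq₁ hq₂ (n - m)).ne'
  field_simp
  rw [← hpow]
  ring

lemma qBinom_pos (hq₁ : -1 < q) (hq₂ : q < 0) {n m : ℕ} (h : m ≤ n) :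
    0 < qBinom q n m := by
  rw [qBinom_eq hq₁ hq₂ h]
  exact div_pos (Pprod_pos hq₁ hq₂ n) (mul_pos (Pprod_pos hq₁ hq₂ m) (Pprod_pos hq₁ hq₂ (n-m)))

lemma qBinom_nonneg (hq₁ : -1 < q) (hq₂ : q < 0) (n m : ℕ) : 0 ≤ qBinom q n m := by
  by_cases h : m ≤ n
  · exact (qBinom_pos hq₁ hq₂ h).le
  · unfold qBinom; rw [if_neg h]

lemma qBinom_zero_right (hq₁ : -1 < q) (hq₂ : q < 0) (n : ℕ) : qBinom q n 0 = 1 := by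
  unfold qBinom
  rw [if_pos (Nat.zero_le n)]
  simp [qFact]
  exact qFact_ne hq₁ hq₂ n

lemma key1 (hq₁ : -1 < q) (hq₂ : q < 0) (r s r' s' : ℕ) (hsum : r + s = r' + s')
    (hr : r' ≤ r) :
    (Dconst q * Cconst (-q))⁻¹ * qFact q (r + s) ≤
      qFact q r' * qFact q s' * qBinom q r r' := by
  have h1q : (0:ℝ) < 1 - q := by linarith
  have hC1 : 1 ≤ Cconst (-q) := one_le_C hq₁ hq₂
  have hD1 : 1 ≤ Dconst q := one_le_D hq₁ hq₂
  have hC0 : (0:ℝ) < Cconst (-q) := by linarith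
  have hD0 : (0:ℝ) < Dconst q := by linarith
  have hpow : (1-q)^r' * (1-q)^s' = (1-q)^(r+s) := by rw [← pow_add]; congr 1; omega
  have hP := Pprod_pos hq₁ hq₂
  have hRHS : qFact q r' * qFact q s' * qBinom q r r'
      = Pprod q s' * Pprod q r / Pprod q (r - r') / (1-q)^(r+s) := by
    have ne1 : Pprod q r' ≠ 0 := (hP r').ne'
    have ne2 : Pprod q (r - r') ≠ 0 := (hP (r - r')).ne'
    have ne3 : (1 - q : ℝ) ≠ 0 := h1q.ne'
    rw [qFact_eq, qFact_eq, qBinom_eq hq₁ hq₂ hr]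
    field_simp
    rw [← hpow]
    ring
  have hLHS : (Dconst q * Cconst (-q))⁻¹ * qFact q (r+s)
      = (Dconst q * Cconst (-q))⁻¹ * Pprod q (r+s) / (1-q)^(r+s) := by
    rw [qFact_eq]; ring
  rw [hRHS, hLHS]
  gcongr ?_ / _
  rw [le_div_iff₀ (hP (r - r'))]
  have hA : Pprod q (r+s) ≤ Pprod q r * Dconst q := Pprod_le_mul_D hq₁ hq₂ (Nat.le_add_right r s)
  have hB : Pprod q (r - r') * (Cconst (-q))⁻¹ ≤ Pprod q s' := Pprod_ge_mul_Cinv hq₁ hq₂ (by omega)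
  calc (Dconst q * Cconst (-q))⁻¹ * Pprod q (r+s) * Pprod q (r-r')
      ≤ (Dconst q * Cconst (-q))⁻¹ * (Pprod q r * Dconst q) * Pprod q (r-r') := by
        have h0 : (0:ℝ) ≤ (Dconst q * Cconst (-q))⁻¹ := by positivity
        have h1 : (0:ℝ) ≤ Pprod q (r-r') := (hP _).le
        exact mul_le_mul_of_nonneg_right (mul_le_mul_of_nonneg_left hA h0) h1
    _ = (Pprod q (r-r') * (Cconst (-q))⁻¹) * Pprod q r := by field_simp
    _ ≤ Pprod q s' * Pprod q r := mul_le_mul_of_nonneg_right hB (hP _).le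

lemma key2 (hq₁ : -1 < q) (hq₂ : q < 0) (r s r' s' i : ℕ) (hsum : r + s = r' + s')
    (hr : r' ≤ r) (hi : i ≤ r') (hj : r' - i ≤ s) :
    qFact q r' * qFact q s' * qBinom q r i * qBinom q s (r' - i) ≤
      Dconst q ^ 3 * Cconst (-q) ^ 3 * qFact q (r + s) := by
  have h1q : (0:ℝ) < 1 - q := by linarith
  have hC1 : 1 ≤ Cconst (-q) := one_le_C hq₁ hq₂
  have hD1 : 1 ≤ Dconst q := one_le_D hq₁ hq₂
  have hC0 : (0:ℝ) < Cconst (-q) := by linarith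
  have hD0 : (0:ℝ) < Dconst q := by linarith
  have hP := Pprod_pos hq₁ hq₂
  set j := r' - i with hjdef
  have hir : i ≤ r := le_trans hi hr
  have hpow : (1-q)^r' * (1-q)^s' = (1-q)^(r+s) := by rw [← pow_add]; congr 1; omega
  have hLHSeq : qFact q r' * qFact q s' * qBinom q r i * qBinom q s j
      = (Pprod q r' * Pprod q s' * Pprod q r * Pprod q s) /
          (Pprod q i * Pprod q (r - i) * Pprod q j * Pprod q (s - j)) / (1-q)^(r+s) := by
    have ne1 : Pprod q i ≠ 0 := (hP i).ne'
    have ne2 : Pprod q (r - i) ≠ 0 := (hP (r - i)).ne'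
    have ne3 : Pprod q j ≠ 0 := (hP j).ne'
    have ne4 : Pprod q (s - j) ≠ 0 := (hP (s - j)).ne'
    have ne5 : (1 - q : ℝ) ≠ 0 := h1q.ne'
    rw [qFact_eq, qFact_eq, qBinom_eq hq₁ hq₂ hir, qBinom_eq hq₁ hq₂ hj]
    field_simp
    rw [← hpow]
    ring_nf
  have hRHSeq : Dconst q ^ 3 * Cconst (-q) ^ 3 * qFact q (r + s)
      = Dconst q ^ 3 * Cconst (-q) ^ 3 * Pprod q (r + s) / (1-q)^(r+s) := by
    rw [qFact_eq]; ring
  rw [hLHSeq, hRHSeq]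
  gcongr ?_ / _
  rw [div_le_iff₀ (mul_pos (mul_pos (mul_pos (hP i) (hP (r-i))) (hP j)) (hP (s-j)))]
  -- core polynomial estimate
  have h1 : Pprod q r' ≤ Pprod q i * Dconst q := Pprod_le_mul_D hq₁ hq₂ hi
  have h2 : Pprod q s' ≤ Pprod q (s - j) * Dconst q := Pprod_le_mul_D hq₁ hq₂ (by omega)
  have h3 : Pprod q s ≤ Pprod q j * Dconst q := Pprod_le_mul_D hq₁ hq₂ hj
  have h4 : Pprod q r ≤ Pprod q (r + s) * Cconst (-q) := by
    have h := Pprod_ge_mul_Cinv hq₁ hq₂ (Nat.le_add_right r s)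
    have h' := mul_le_mul_of_nonneg_right h hC0.le
    rwa [mul_assoc, inv_mul_cancel₀ hC0.ne', mul_one] at h'
  have h5 : 1 ≤ Pprod q (r - i) * Cconst (-q) := by
    have := Pprod_ge_mul_Cinv hq₁ hq₂ (Nat.zero_le (r - i))
    have hP0 : Pprod q 0 = 1 := by simp [Pprod]
    rw [hP0] at this
    have h' := mul_le_mul_of_nonneg_right this hC0.le
    rwa [one_mul, inv_mul_cancel₀ hC0.ne'] at h'
  calc Pprod q r' * Pprod q s' * Pprod q r * Pprod q s
      ≤ (Pprod q i * Dconst q) * (Pprod q (s - j) * Dconst q) *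
          (Pprod q (r + s) * Cconst (-q)) * (Pprod q j * Dconst q) := by
        have w1 : (0:ℝ) ≤ Pprod q i * Dconst q := mul_nonneg (hP i).le hD0.le
        have w2 : (0:ℝ) ≤ Pprod q (s-j) * Dconst q := mul_nonneg (hP (s-j)).le hD0.le
        have w3 : (0:ℝ) ≤ Pprod q (r+s) * Cconst (-q) := mul_nonneg (hP (r+s)).le hC0.le
        exact mul_le_mul (mul_le_mul (mul_le_mul h1 h2 (hP s').le w1) h4 (hP r).le
          (mul_nonneg w1 w2)) h3 (hP s).le (mul_nonneg (mul_nonneg w1 w2) w3)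
    _ = Dconst q ^ 3 * Cconst (-q) *
          (Pprod q (r+s) * (Pprod q i * Pprod q j * Pprod q (s - j))) := by ring
    _ ≤ Dconst q ^ 3 * Cconst (-q) *
          (Pprod q (r+s) * (Pprod q i * Pprod q j * Pprod q (s - j))) *
          (Pprod q (r - i) * Cconst (-q)) := by
        have n1 : (0:ℝ) ≤ Dconst q^3 * Cconst (-q) := mul_nonneg (pow_nonneg hD0.le 3) hC0.le
        have n2 : (0:ℝ) ≤ Pprod q (r+s) * (Pprod q i * Pprod q j * Pprod q (s-j)) :=
          mul_nonneg (hP _).le (mul_nonneg (mul_nonneg (hP _).le (hP _).le) (hP _).le)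
        exact le_mul_of_one_le_right (mul_nonneg n1 n2) h5
    _ ≤ (Dconst q ^ 3 * Cconst (-q) *
          (Pprod q (r+s) * (Pprod q i * Pprod q j * Pprod q (s - j))) *
          (Pprod q (r - i) * Cconst (-q))) * Cconst (-q) := by
        have n1 : (0:ℝ) ≤ Dconst q^3 * Cconst (-q) := mul_nonneg (pow_nonneg hD0.le 3) hC0.le
        have n2 : (0:ℝ) ≤ Pprod q (r+s) * (Pprod q i * Pprod q j * Pprod q (s-j)) :=
          mul_nonneg (hP _).le (mul_nonneg (mul_nonneg (hP _).le (hP _).le) (hP _).le)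
        exact le_mul_of_one_le_right (mul_nonneg (mul_nonneg n1 n2)
          (mul_nonneg (hP _).le hC0.le)) hC1
    _ = Dconst q ^ 3 * Cconst (-q) ^ 3 * Pprod q (r + s) *
          (Pprod q i * Pprod q (r - i) * Pprod q j * Pprod q (s - j)) := by ring

lemma tail_sum_le {q : ℝ} (hq₁ : -1 < q) (hq₂ : q < 0) (n : ℕ) :
    ∑ i ∈ Finset.range n, (-q) ^ (n - i) ≤ -q / (1 - -q) := by
  have hq0 : (0:ℝ) ≤ -q := by linarith
  have ht1 : -q < 1 := by linarith
  have hrefl : ∑ i ∈ Finset.range n, (-q) ^ (n - i)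
      = ∑ j ∈ Finset.range n, (-q) ^ (j + 1) := by
    rw [← Finset.sum_range_reflect]
    apply Finset.sum_congr rfl
    intro j hj
    congr 1
    have := Finset.mem_range.mp hj
    omega
  rw [hrefl]
  have h1 : ∑ j ∈ Finset.range n, (-q) ^ (j + 1) = -q * ∑ j ∈ Finset.range n, (-q) ^ j := by
    rw [Finset.mul_sum]
    exact Finset.sum_congr rfl (fun j _ => by rw [pow_succ'])
  rw [h1, div_eq_mul_inv]
  apply mul_le_mul_of_nonneg_left _ hq0
  calc ∑ j ∈ Finset.range n, (-q) ^ j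
      ≤ ∑' j : ℕ, (-q) ^ j := Summable.sum_le_tsum _ (fun j _ => pow_nonneg hq0 j)
        (summable_geometric_of_lt_one hq0 ht1)
    _ = (1 - -q)⁻¹ := tsum_geometric_of_lt_one hq0 ht1


/-- Lower estimate of the inner-product sum for `-1 < q < 0`,
with `E(q) = (D(q) C(|q|))⁻¹ - (|q|/(1-|q|)) D(q)³ C(|q|)³`. -/
theorem inner_sum_lower_neg (q : ℝ) (hq₁ : -1 < q) (hq₂ : q < 0)
    (r s r' s' k : ℕ) (hsum : r + s = r' + s') (hr : r' ≤ r) :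
    ((Dconst q * Cconst |q|)⁻¹ - (|q| / (1 - |q|)) * (Dconst q ^ 3 * Cconst |q| ^ 3)) *
      |q| ^ (k * (r - r')) * qFact q (r + s) ≤
    |∑ i ∈ Finset.range (r' + 1),
      q ^ ((r - i) * (r' - i) + k * (r - i) + k * (r' - i)) *
        qFact q r' * qFact q s' * qBinom q r i * qBinom q s (r' - i)| := by
  have habs : |q| = -q := abs_of_neg hq₂
  rw [habs]
  have hq0 : (0:ℝ) < -q := by linarith
  have ht1 : -q < 1 := by linarith
  have h1q : (0:ℝ) < 1 - q := by linarith
  have hC1 : 1 ≤ Cconst (-q) := one_le_C hq₁ hq₂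
  have hD1 : 1 ≤ Dconst q := one_le_D hq₁ hq₂
  have hC0 : (0:ℝ) < Cconst (-q) := by linarith
  have hD0 : (0:ℝ) < Dconst q := by linarith
  have hF := qFact_pos hq₁ hq₂
  rw [Finset.sum_range_succ]
  -- the main term
  have hXpos : 0 < qFact q r' * qFact q s' * qBinom q r r' :=
    mul_pos (mul_pos (hF r') (hF s')) (qBinom_pos hq₁ hq₂ hr)
  have hmain_eq : |q ^ ((r - r') * (r' - r') + k * (r - r') + k * (r' - r')) *
        qFact q r' * qFact q s' * qBinom q r r' * qBinom q s (r' - r')|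
      = (-q) ^ (k * (r - r')) * (qFact q r' * qFact q s' * qBinom q r r') := by
    rw [Nat.sub_self, qBinom_zero_right hq₁ hq₂, mul_one]
    rw [Nat.mul_zero, Nat.mul_zero, Nat.zero_add, Nat.add_zero]
    have hre : q ^ (k * (r - r')) * qFact q r' * qFact q s' * qBinom q r r'
        = q ^ (k * (r - r')) * (qFact q r' * qFact q s' * qBinom q r r') := by ring
    rw [hre, abs_mul, abs_pow, habs, abs_of_pos hXpos]
  have hmain_lb : (Dconst q * Cconst (-q))⁻¹ * (-q) ^ (k * (r - r')) * qFact q (r + s)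
      ≤ |q ^ ((r - r') * (r' - r') + k * (r - r') + k * (r' - r')) *
        qFact q r' * qFact q s' * qBinom q r r' * qBinom q s (r' - r')| := by
    rw [hmain_eq]
    have hk := key1 hq₁ hq₂ r s r' s' hsum hr
    calc (Dconst q * Cconst (-q))⁻¹ * (-q) ^ (k * (r - r')) * qFact q (r + s)
        = (-q) ^ (k * (r - r')) * ((Dconst q * Cconst (-q))⁻¹ * qFact q (r + s)) := by ring
      _ ≤ (-q) ^ (k * (r - r')) * (qFact q r' * qFact q s' * qBinom q r r') :=
        mul_le_mul_of_nonneg_left hk (pow_nonneg hq0.le _)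
  -- error terms
  have herr : ∀ i ∈ Finset.range r',
      |q ^ ((r - i) * (r' - i) + k * (r - i) + k * (r' - i)) *
        qFact q r' * qFact q s' * qBinom q r i * qBinom q s (r' - i)|
      ≤ Dconst q ^ 3 * Cconst (-q) ^ 3 * ((-q) ^ (k * (r - r')) * qFact q (r + s))
          * (-q) ^ (r' - i) := by
    intro i hi
    have hi' : i < r' := Finset.mem_range.mp hi
    have hRHSnn : (0:ℝ) ≤ Dconst q ^ 3 * Cconst (-q) ^ 3 *
        ((-q) ^ (k * (r - r')) * qFact q (r + s)) * (-q) ^ (r' - i) := by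
      apply mul_nonneg
      apply mul_nonneg
      · exact mul_nonneg (pow_nonneg hD0.le 3) (pow_nonneg hC0.le 3)
      · exact mul_nonneg (pow_nonneg hq0.le _) (hF _).le
      · exact pow_nonneg hq0.le _
    by_cases hjs : r' - i ≤ s
    · have hXnn : (0:ℝ) ≤ qFact q r' * qFact q s' * qBinom q r i * qBinom q s (r' - i) :=
        mul_nonneg (mul_nonneg (mul_nonneg (hF r').le (hF s').le)
          (qBinom_nonneg hq₁ hq₂ r i)) (qBinom_nonneg hq₁ hq₂ s (r' - i))
      have habs_eq : |q ^ ((r - i) * (r' - i) + k * (r - i) + k * (r' - i)) *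
            qFact q r' * qFact q s' * qBinom q r i * qBinom q s (r' - i)|
          = (-q) ^ ((r - i) * (r' - i) + k * (r - i) + k * (r' - i)) *
            (qFact q r' * qFact q s' * qBinom q r i * qBinom q s (r' - i)) := by
        have hre : q ^ ((r - i) * (r' - i) + k * (r - i) + k * (r' - i)) *
            qFact q r' * qFact q s' * qBinom q r i * qBinom q s (r' - i)
            = q ^ ((r - i) * (r' - i) + k * (r - i) + k * (r' - i)) *
            (qFact q r' * qFact q s' * qBinom q r i * qBinom q s (r' - i)) := by ring
        rw [hre, abs_mul, abs_pow, habs, abs_of_nonneg hXnn]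
      have hexp : k * (r - r') + (r' - i) ≤ (r - i) * (r' - i) + k * (r - i) + k * (r' - i) := by
        have h1 : k * (r - r') ≤ k * (r - i) := Nat.mul_le_mul_left k (by omega)
        have h2 : r' - i ≤ (r - i) * (r' - i) := Nat.le_mul_of_pos_left _ (by omega)
        omega
      have hpow_le : (-q) ^ ((r - i) * (r' - i) + k * (r - i) + k * (r' - i))
          ≤ (-q) ^ (k * (r - r')) * (-q) ^ (r' - i) := by
        rw [← pow_add]
        exact pow_le_pow_of_le_one hq0.le ht1.le hexp
      rw [habs_eq]
      calc (-q) ^ ((r - i) * (r' - i) + k * (r - i) + k * (r' - i)) *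
            (qFact q r' * qFact q s' * qBinom q r i * qBinom q s (r' - i))
          ≤ ((-q) ^ (k * (r - r')) * (-q) ^ (r' - i)) *
            (qFact q r' * qFact q s' * qBinom q r i * qBinom q s (r' - i)) :=
            mul_le_mul_of_nonneg_right hpow_le hXnn
        _ ≤ ((-q) ^ (k * (r - r')) * (-q) ^ (r' - i)) *
            (Dconst q ^ 3 * Cconst (-q) ^ 3 * qFact q (r + s)) := by
            apply mul_le_mul_of_nonneg_left (key2 hq₁ hq₂ r s r' s' i hsum hr hi'.le hjs)
            exact mul_nonneg (pow_nonneg hq0.le _) (pow_nonneg hq0.le _)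
        _ = Dconst q ^ 3 * Cconst (-q) ^ 3 * ((-q) ^ (k * (r - r')) * qFact q (r + s))
              * (-q) ^ (r' - i) := by ring
    · have hz : qBinom q s (r' - i) = 0 := by unfold qBinom; rw [if_neg hjs]
      rw [hz, mul_zero, abs_zero]
      exact hRHSnn
  -- sum of error terms
  have hsum_err : |∑ i ∈ Finset.range r',
      q ^ ((r - i) * (r' - i) + k * (r - i) + k * (r' - i)) *
        qFact q r' * qFact q s' * qBinom q r i * qBinom q s (r' - i)|
      ≤ Dconst q ^ 3 * Cconst (-q) ^ 3 * ((-q) ^ (k * (r - r')) * qFact q (r + s))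
          * (-q / (1 - -q)) := by
    calc |∑ i ∈ Finset.range r',
        q ^ ((r - i) * (r' - i) + k * (r - i) + k * (r' - i)) *
          qFact q r' * qFact q s' * qBinom q r i * qBinom q s (r' - i)|
        ≤ ∑ i ∈ Finset.range r',
          |q ^ ((r - i) * (r' - i) + k * (r - i) + k * (r' - i)) *
            qFact q r' * qFact q s' * qBinom q r i * qBinom q s (r' - i)| :=
          Finset.abs_sum_le_sum_abs _ _
      _ ≤ ∑ i ∈ Finset.range r',
          Dconst q ^ 3 * Cconst (-q) ^ 3 * ((-q) ^ (k * (r - r')) * qFact q (r + s))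
            * (-q) ^ (r' - i) := Finset.sum_le_sum herr
      _ = Dconst q ^ 3 * Cconst (-q) ^ 3 * ((-q) ^ (k * (r - r')) * qFact q (r + s))
            * ∑ i ∈ Finset.range r', (-q) ^ (r' - i) := by rw [← Finset.mul_sum]
      _ ≤ Dconst q ^ 3 * Cconst (-q) ^ 3 * ((-q) ^ (k * (r - r')) * qFact q (r + s))
            * (-q / (1 - -q)) := by
          apply mul_le_mul_of_nonneg_left (tail_sum_le hq₁ hq₂ r')
          apply mul_nonneg
          · exact mul_nonneg (pow_nonneg hD0.le 3) (pow_nonneg hC0.le 3)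
          · exact mul_nonneg (pow_nonneg hq0.le _) (hF _).le
  -- triangle inequality assembly
  set A := ∑ i ∈ Finset.range r',
      q ^ ((r - i) * (r' - i) + k * (r - i) + k * (r' - i)) *
        qFact q r' * qFact q s' * qBinom q r i * qBinom q s (r' - i) with hA
  set m := q ^ ((r - r') * (r' - r') + k * (r - r') + k * (r' - r')) *
        qFact q r' * qFact q s' * qBinom q r r' * qBinom q s (r' - r') with hm
  have htri : |m| - |A| ≤ |A + m| := by
    have h2 := abs_sub (A + m) A
    have h3 : A + m - A = m := by ring
    rw [h3] at h2
    linarith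
  have hexpand : ((Dconst q * Cconst (-q))⁻¹ - -q / (1 - -q) * (Dconst q ^ 3 * Cconst (-q) ^ 3))
        * (-q) ^ (k * (r - r')) * qFact q (r + s)
      = (Dconst q * Cconst (-q))⁻¹ * (-q) ^ (k * (r - r')) * qFact q (r + s)
        - Dconst q ^ 3 * Cconst (-q) ^ 3 * ((-q) ^ (k * (r - r')) * qFact q (r + s))
          * (-q / (1 - -q)) := by ring
  linarith [hmain_lb, hsum_err, htri]
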